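/- Let K, p, q be natural numbers and let C, D, α, β be real numbers with C ≥ 1, D ≥ 0 and 1 ≤ α < β. Let a, b : ℕ → ℝ be nonnegative sequences such that a(i) ≤ C·i^p·α^i for all i > K, (1/C)·k^q·β^k ≤ b(k) ≤ C·k^q·β^k for all k > K, b(j) ≤ D for all j ≤ K, and b(k) > 0 for all k. Let x : ℕ → ℕ → ℝ be a nonnegative double sequence satisfying x(i,k) ≤ b(k−i)·a(i) for all 0 ≤ i ≤ k. Then there exists a constant M such that for every k, the sum over i = 0,…,k of i·x(i,k)/b(k) is at most M. -/

import Mathlib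

/-- Combinatorial core of the bounded expected penetration distance theorem:
if `a` grows at most like `i^p * α^i`, `b` grows like `k^q * β^k` with `1 ≤ α < β`,
the finitely many initial values of `b` are bounded by `D`, `b` is positive, and
`x i k ≤ b (k - i) * a i`, then `∑_{i=0}^{k} i * x i k / b k` is uniformly bounded. -/
theorem bounded_expected_penetration_distance_core
    (K p q : ℕ) (C D α β : ℝ) (hC : 1 ≤ C) (hD : 0 ≤ D) (hα : 1 ≤ α) (hαβ : α < β)
    (a b : ℕ → ℝ)
    (ha_nonneg : ∀ i, 0 ≤ a i) (hb_nonneg : ∀ k, 0 ≤ b k)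
    (ha : ∀ i, K < i → a i ≤ C * (i : ℝ) ^ p * α ^ i)
    (hb_lower : ∀ k, K < k → (1 / C) * (k : ℝ) ^ q * β ^ k ≤ b k)
    (hb_upper : ∀ k, K < k → b k ≤ C * (k : ℝ) ^ q * β ^ k)
    (hb_init : ∀ j, j ≤ K → b j ≤ D)
    (hb_pos : ∀ k, 0 < b k)
    (x : ℕ → ℕ → ℝ)
    (hx_nonneg : ∀ i k, 0 ≤ x i k)
    (hx : ∀ i k, i ≤ k → x i k ≤ b (k - i) * a i) :
    ∃ M : ℝ, ∀ k, ∑ i ∈ Finset.range (k + 1), (i : ℝ) * x i k / b k ≤ M := by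
  have hβ1 : (1:ℝ) < β := lt_of_le_of_lt hα hαβ
  have hβ0 : (0:ℝ) < β := by linarith
  have hα0 : (0:ℝ) < α := by linarith
  have hC0 : (0:ℝ) < C := by linarith
  set r : ℝ := α / β with hr
  have hr0 : 0 ≤ r := div_nonneg hα0.le hβ0.le
  have hr1 : r < 1 := (div_lt_one hβ0).mpr hαβ
  have hsum : Summable (fun n : ℕ => (n:ℝ) ^ (p+1) * r ^ n) := by
    have := summable_pow_mul_geometric_of_norm_lt_one (k := p+1) (r := r)
      (by rw [Real.norm_eq_abs, abs_of_nonneg hr0]; exact hr1)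
    simpa using this
  set E : ℝ := ∑' n : ℕ, (n:ℝ) ^ (p+1) * r ^ n with hE
  have htermE : ∀ n : ℕ, (n:ℝ) ^ (p+1) * r ^ n ≤ E := fun n =>
    Summable.le_tsum hsum n (fun m _ => mul_nonneg (pow_nonneg (Nat.cast_nonneg m) _) (pow_nonneg hr0 m))
  have hE0 : 0 ≤ E := le_trans (by simp) (htermE 0)
  set A : ℝ := ∑ j ∈ Finset.range (K+1), a j with hA
  have hAle : ∀ i, i ≤ K → a i ≤ A := fun i hi =>
    Finset.single_le_sum (fun j _ => ha_nonneg j) (Finset.mem_range.mpr (Nat.lt_succ_of_le hi))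
  have hA0 : 0 ≤ A := Finset.sum_nonneg fun j _ => ha_nonneg j
  set M0 : ℝ := ((K:ℝ)+1) * ((K:ℝ) * A * C^2) + C^3 * E + ((K:ℝ)+1) * (C^2 * D * E) with hM0
  have hM00 : 0 ≤ M0 := by
    rw [hM0]
    have h1 : (0:ℝ) ≤ ((K:ℝ)+1) * ((K:ℝ) * A * C^2) :=
      mul_nonneg (by positivity) (mul_nonneg (mul_nonneg (Nat.cast_nonneg K) hA0) (by positivity))
    have h2 : (0:ℝ) ≤ C^3 * E := mul_nonneg (by positivity) hE0
    have h3 : (0:ℝ) ≤ ((K:ℝ)+1) * (C^2 * D * E) :=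
      mul_nonneg (by positivity) (mul_nonneg (mul_nonneg (by positivity) hD) hE0)
    linarith
  have hmain : ∀ k, 2*K < k → ∑ i ∈ Finset.range (k+1), (i:ℝ) * x i k / b k ≤ M0 := by
    intro k hk
    set P : ℝ := (k:ℝ)^q * β^k with hP
    have hk0 : (0:ℝ) < (k:ℝ) := by exact_mod_cast (by omega : 0 < k)
    have hP0 : 0 < P := by rw [hP]; exact mul_pos (pow_pos hk0 q) (pow_pos hβ0 k)
    have hPC0 : 0 < P / C := div_pos hP0 hC0
    have hbk : P / C ≤ b k := by
      have h := hb_lower k (by omega)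
      calc P / C = 1/C * (k:ℝ)^q * β^k := by rw [hP]; ring
        _ ≤ b k := h
    have hsplit1 : (K+1 : ℕ) ≤ k - K := by omega
    have hsplit2 : (k - K : ℕ) ≤ k + 1 := by omega
    rw [Finset.range_eq_Ico,
      ← Finset.sum_Ico_consecutive (fun i => (i:ℝ) * x i k / b k) (Nat.zero_le (K+1))
        (by omega : K+1 ≤ k+1),
      ← Finset.sum_Ico_consecutive (fun i => (i:ℝ) * x i k / b k) hsplit1 hsplit2]
    have hbound1 : ∑ i ∈ Finset.Ico 0 (K+1), (i:ℝ) * x i k / b k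
        ≤ ((K:ℝ)+1) * ((K:ℝ) * A * C^2) := by
      have hterm : ∀ i ∈ Finset.Ico 0 (K+1), (i:ℝ) * x i k / b k ≤ (K:ℝ) * A * C^2 := by
        intro i hi
        have hiK : i ≤ K := by
          have := (Finset.mem_Ico.mp hi).2; omega
        have hik : i ≤ k := by omega
        have hKi : K < k - i := by omega
        have hbu : b (k - i) ≤ C * P := by
          have h1 := hb_upper (k - i) hKi
          have h2 : ((k - i : ℕ):ℝ)^q ≤ (k:ℝ)^q :=
            pow_le_pow_left₀ (Nat.cast_nonneg _) (Nat.cast_le.mpr (Nat.sub_le k i)) q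
          have h3 : β ^ (k - i) ≤ β ^ k := pow_le_pow_right₀ hβ1.le (Nat.sub_le k i)
          calc b (k - i) ≤ C * ((k - i : ℕ):ℝ)^q * β^(k-i) := h1
            _ ≤ C * (k:ℝ)^q * β^k := by
                apply mul_le_mul (mul_le_mul le_rfl h2 (by positivity) hC0.le) h3
                  (by positivity) (by positivity)
            _ = C * P := by rw [hP]; ring
        have hxu : x i k ≤ (C * P) * A :=
          le_trans (hx i k hik)
            (mul_le_mul hbu (hAle i hiK) (ha_nonneg i) (by positivity))
        have hnum : (i:ℝ) * x i k ≤ (K:ℝ) * ((C * P) * A) :=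
          mul_le_mul (Nat.cast_le.mpr hiK) hxu (hx_nonneg i k) (Nat.cast_nonneg K)
        calc (i:ℝ) * x i k / b k ≤ ((K:ℝ) * ((C * P) * A)) / (P / C) :=
              div_le_div₀ (by positivity) hnum hPC0 hbk
          _ = (K:ℝ) * A * C^2 := by field_simp
      calc ∑ i ∈ Finset.Ico 0 (K+1), (i:ℝ) * x i k / b k
          ≤ ∑ _i ∈ Finset.Ico 0 (K+1), (K:ℝ) * A * C^2 := Finset.sum_le_sum hterm
        _ = ((K:ℝ)+1) * ((K:ℝ) * A * C^2) := by
            rw [Finset.sum_const, Nat.card_Ico]; push_cast; ring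
    have hbound2 : ∑ i ∈ Finset.Ico (K+1) (k-K), (i:ℝ) * x i k / b k ≤ C^3 * E := by
      have hterm : ∀ i ∈ Finset.Ico (K+1) (k-K), (i:ℝ) * x i k / b k
          ≤ C^3 * ((i:ℝ)^(p+1) * r^i) := by
        intro i hi
        obtain ⟨hi1, hi2⟩ := Finset.mem_Ico.mp hi
        have hKi : K < i := by omega
        have hik : i ≤ k := by omega
        have hKki : K < k - i := by omega
        have hrβ : r ^ i * β ^ k = α ^ i * β ^ (k - i) := by
          rw [hr, div_pow, div_mul_eq_mul_div,
            div_eq_iff (by positivity : (β:ℝ)^i ≠ 0), mul_assoc, ← pow_add]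
          have h : k - i + i = k := by omega
          rw [h]
        have hxu : x i k ≤ (C * ((k-i:ℕ):ℝ)^q * β^(k-i)) * (C * (i:ℝ)^p * α^i) :=
          le_trans (hx i k hik)
            (mul_le_mul (hb_upper (k-i) hKki) (ha i hKi) (ha_nonneg i) (by positivity))
        have hnum : (i:ℝ) * x i k
            ≤ (i:ℝ) * ((C * ((k-i:ℕ):ℝ)^q * β^(k-i)) * (C * (i:ℝ)^p * α^i)) :=
          mul_le_mul_of_nonneg_left hxu (Nat.cast_nonneg i)
        have hW : ((k-i:ℕ):ℝ)^q ≤ (k:ℝ)^q :=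
          pow_le_pow_left₀ (Nat.cast_nonneg _) (Nat.cast_le.mpr (Nat.sub_le k i)) q
        have hkey : (i:ℝ) * ((C * ((k-i:ℕ):ℝ)^q * β^(k-i)) * (C * (i:ℝ)^p * α^i))
            ≤ C^3 * ((i:ℝ)^(p+1) * r^i) * (P / C) := by
          have hL : (i:ℝ) * ((C * ((k-i:ℕ):ℝ)^q * β^(k-i)) * (C * (i:ℝ)^p * α^i))
              = (C^2 * (i:ℝ)^(p+1) * α^i * β^(k-i)) * ((k-i:ℕ):ℝ)^q := by
            rw [pow_succ]; ring
          have hR : C^3 * ((i:ℝ)^(p+1) * r^i) * (P / C)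
              = (C^2 * (i:ℝ)^(p+1) * α^i * β^(k-i)) * (k:ℝ)^q := by
            rw [hP]
            have : C^3 * ((i:ℝ)^(p+1) * r^i) * ((k:ℝ)^q * β^k / C)
                = C^2 * (i:ℝ)^(p+1) * (r^i * β^k) * (k:ℝ)^q := by
              field_simp
            rw [this, hrβ]; ring
          rw [hL, hR]
          exact mul_le_mul_of_nonneg_left hW (by positivity)
        calc (i:ℝ) * x i k / b k
            ≤ (C^3 * ((i:ℝ)^(p+1) * r^i) * (P / C)) / (P / C) :=
              div_le_div₀ (by positivity) (le_trans hnum hkey) hPC0 hbk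
          _ = C^3 * ((i:ℝ)^(p+1) * r^i) := by field_simp
      calc ∑ i ∈ Finset.Ico (K+1) (k-K), (i:ℝ) * x i k / b k
          ≤ ∑ i ∈ Finset.Ico (K+1) (k-K), C^3 * ((i:ℝ)^(p+1) * r^i) :=
            Finset.sum_le_sum hterm
        _ = C^3 * ∑ i ∈ Finset.Ico (K+1) (k-K), (i:ℝ)^(p+1) * r^i := by
            rw [Finset.mul_sum]
        _ ≤ C^3 * E := by
            apply mul_le_mul_of_nonneg_left _ (by positivity)
            exact Summable.sum_le_tsum _ (fun m _ =>
              mul_nonneg (pow_nonneg (Nat.cast_nonneg m) _) (pow_nonneg hr0 m)) hsum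
    have hbound3 : ∑ i ∈ Finset.Ico (k-K) (k+1), (i:ℝ) * x i k / b k
        ≤ ((K:ℝ)+1) * (C^2 * D * E) := by
      have hterm : ∀ i ∈ Finset.Ico (k-K) (k+1), (i:ℝ) * x i k / b k ≤ C^2 * D * E := by
        intro i hi
        obtain ⟨hi1, hi2⟩ := Finset.mem_Ico.mp hi
        have hKi : K < i := by omega
        have hik : i ≤ k := by omega
        have hkiK : k - i ≤ K := by omega
        have hbu : b (k - i) ≤ D := hb_init _ hkiK
        have hau : a i ≤ C * (k:ℝ)^p * α^k := by
          have h1 := ha i hKi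
          have h2 : (i:ℝ)^p ≤ (k:ℝ)^p :=
            pow_le_pow_left₀ (Nat.cast_nonneg _) (Nat.cast_le.mpr hik) p
          have h3 : α^i ≤ α^k := pow_le_pow_right₀ hα hik
          calc a i ≤ C * (i:ℝ)^p * α^i := h1
            _ ≤ C * (k:ℝ)^p * α^k :=
              mul_le_mul (mul_le_mul le_rfl h2 (by positivity) hC0.le) h3
                (by positivity) (by positivity)
        have hxu : x i k ≤ D * (C * (k:ℝ)^p * α^k) :=
          le_trans (hx i k hik)
            (mul_le_mul hbu hau (ha_nonneg i) hD)
        have hnum : (i:ℝ) * x i k ≤ (k:ℝ) * (D * (C * (k:ℝ)^p * α^k)) :=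
          mul_le_mul (Nat.cast_le.mpr hik) hxu (hx_nonneg i k) (Nat.cast_nonneg k)
        have hrβk : r ^ k * β ^ k = α ^ k := by
          rw [hr, div_pow, div_mul_cancel₀ _ (by positivity : (β:ℝ)^k ≠ 0)]
        have hkey : (k:ℝ) * (D * (C * (k:ℝ)^p * α^k))
            ≤ C^2 * D * ((k:ℝ)^(p+1) * r^k) * (P / C) := by
          have hL : (k:ℝ) * (D * (C * (k:ℝ)^p * α^k))
              = (C * D * (k:ℝ)^(p+1) * α^k) * 1 := by
            rw [pow_succ]; ring
          have hR : C^2 * D * ((k:ℝ)^(p+1) * r^k) * (P / C)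
              = (C * D * (k:ℝ)^(p+1) * α^k) * (k:ℝ)^q := by
            rw [hP]
            have : C^2 * D * ((k:ℝ)^(p+1) * r^k) * ((k:ℝ)^q * β^k / C)
                = C * D * (k:ℝ)^(p+1) * (r^k * β^k) * (k:ℝ)^q := by
              field_simp
            rw [this, hrβk]
          have hkq : (1:ℝ) ≤ (k:ℝ)^q :=
            one_le_pow₀ (by exact_mod_cast Nat.one_le_iff_ne_zero.mpr (by omega : k ≠ 0))
          rw [hL, hR]
          exact mul_le_mul_of_nonneg_left hkq (by positivity)
        calc (i:ℝ) * x i k / b k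
            ≤ (C^2 * D * ((k:ℝ)^(p+1) * r^k) * (P / C)) / (P / C) :=
              div_le_div₀ (by positivity) (le_trans hnum hkey) hPC0 hbk
          _ = C^2 * D * ((k:ℝ)^(p+1) * r^k) := by field_simp
          _ ≤ C^2 * D * E :=
            mul_le_mul_of_nonneg_left (htermE k) (by positivity)
      calc ∑ i ∈ Finset.Ico (k-K) (k+1), (i:ℝ) * x i k / b k
          ≤ ∑ _i ∈ Finset.Ico (k-K) (k+1), C^2 * D * E := Finset.sum_le_sum hterm
        _ = ((K:ℝ)+1) * (C^2 * D * E) := by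
            rw [Finset.sum_const, Nat.card_Ico]
            have : k + 1 - (k - K) = K + 1 := by omega
            rw [this]; push_cast; ring
    rw [hM0]
    linarith
  set T : ℝ := ∑ k ∈ Finset.range (2*K+1), ∑ i ∈ Finset.range (k+1), (i:ℝ) * x i k / b k
    with hT
  have hS0 : ∀ k, 0 ≤ ∑ i ∈ Finset.range (k+1), (i:ℝ) * x i k / b k := fun k =>
    Finset.sum_nonneg fun i _ =>
      div_nonneg (mul_nonneg (Nat.cast_nonneg i) (hx_nonneg i k)) (hb_pos k).le
  have hT0 : 0 ≤ T := Finset.sum_nonneg fun k _ => hS0 k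
  refine ⟨M0 + T, fun k => ?_⟩
  rcases le_or_gt k (2*K) with hk | hk
  · have : ∑ i ∈ Finset.range (k+1), (i:ℝ) * x i k / b k ≤ T :=
      Finset.single_le_sum (f := fun k => ∑ i ∈ Finset.range (k+1), (i:ℝ) * x i k / b k)
        (fun j _ => hS0 j) (Finset.mem_range.mpr (by omega))
    linarith
  · have := hmain k hk
    linarith
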